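/- For any square real matrix M of size m and any real number w, det(M + w·U) = det(M) + w·S(co(M)), where U is the m×m all-ones matrix, co(M) is the cofactor matrix of M, and S denotes the sum of all entries of a matrix. -/

import Mathlib

open Matrix Filter Topology

/-- Cofactor matrix: the transpose of the adjugate. -/
noncomputable def cof {m : ℕ} (M : Matrix (Fin m) (Fin m) ℝ) : Matrix (Fin m) (Fin m) ℝ :=
  (Matrix.adjugate M)ᵀ

/-- Sum of all entries of a matrix. -/
def entrySum {m p : ℕ} (A : Matrix (Fin m) (Fin p) ℝ) : ℝ := ∑ i, ∑ j, A i j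

theorem entrySum_cof {n : ℕ} (A : Matrix (Fin n) (Fin n) ℝ) :
    entrySum (cof A) = ∑ i, ∑ j, A.adjugate i j := by
  simp only [entrySum, cof, Matrix.transpose_apply]
  rw [Finset.sum_comm]

theorem key {n : ℕ} (A : Matrix (Fin n) (Fin n) ℝ) (w : ℝ) (hA : IsUnit A.det) :
    (A + w • (Matrix.of fun _ _ => (1 : ℝ))).det = A.det + w * ∑ i, ∑ j, A.adjugate i j := by
  have hJ : (w • (Matrix.of fun _ _ => (1 : ℝ)) : Matrix (Fin n) (Fin n) ℝ) =
      replicateCol Unit (fun _ => w) * replicateRow Unit (fun _ => (1:ℝ)) := by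
    ext i j; simp [Matrix.mul_apply]
  rw [hJ, det_add_replicateCol_mul_replicateRow hA,
    Matrix.det_unique (1 + replicateRow Unit (fun _ => (1:ℝ)) * A⁻¹ * replicateCol Unit (fun _ => w))]
  have hinv : A⁻¹ = (A.det)⁻¹ • A.adjugate := by rw [Matrix.inv_def, Ring.inverse_eq_inv']
  simp only [Matrix.add_apply, Matrix.one_apply_eq, Matrix.mul_apply, Matrix.replicateRow_apply,
    Matrix.replicateCol_apply, hinv, Matrix.smul_apply, smul_eq_mul]
  rw [mul_add, mul_one]
  congr 1
  have hd : A.det ≠ 0 := hA.ne_zero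
  field_simp [Finset.mul_sum, Finset.sum_mul]
  simp only [Finset.mul_sum, Finset.sum_mul]; rw [Finset.sum_comm]
  exact Finset.sum_congr rfl fun i _ => Finset.sum_congr rfl fun j _ => by
    rw [div_mul_eq_mul_div, mul_div_assoc', mul_comm A.det, mul_div_assoc, div_self hd, mul_one,
      mul_comm]

theorem det_add_smul_allOnes (m : ℕ) (M : Matrix (Fin m) (Fin m) ℝ) (w : ℝ) :
    (M + w • (Matrix.of fun _ _ => (1 : ℝ))).det = M.det + w * entrySum (cof M) := by
  -- the perturbed determinant as a polynomial evaluation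
  have hp : ∀ ε : ℝ, (M + ε • (1 : Matrix (Fin m) (Fin m) ℝ)).det
      = ((-M).charpoly).eval ε := by
    intro ε
    rw [Matrix.charpoly, ← Polynomial.coe_evalRingHom, RingHom.map_det]
    congr 1
    ext i j
    by_cases h : i = j <;>
      simp [charmatrix_apply, Matrix.map_apply, Matrix.diagonal_apply, h, Matrix.one_apply, add_comm]
  set S : Set ℝ := {ε | ((-M).charpoly).eval ε = 0} with hSdef
  have hSfin : S.Finite := by
    have := Polynomial.finite_setOf_isRoot ((-M).charpoly_monic.ne_zero)
    simpa [Polynomial.IsRoot, hSdef] using this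
  have hev : ∀ᶠ ε in 𝓝[≠] (0:ℝ), ε ∉ S := by
    have hcl : IsClosed (S \ {0}) := (hSfin.diff (t := {0})).isClosed
    have h0 : (0:ℝ) ∈ (S \ {0})ᶜ := by simp
    have hmem : (S \ {0})ᶜ ∈ 𝓝 (0:ℝ) := hcl.isOpen_compl.mem_nhds h0
    filter_upwards [eventually_nhdsWithin_of_eventually_nhds
      (eventually_mem_set.mpr hmem), self_mem_nhdsWithin] with ε h1 h2 hS
    exact h1 ⟨hS, h2⟩
  set f : ℝ → ℝ := fun ε =>
    ((M + ε • (1 : Matrix (Fin m) (Fin m) ℝ)) + w • (Matrix.of fun _ _ => (1 : ℝ))).det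
  set g : ℝ → ℝ := fun ε => (M + ε • (1 : Matrix (Fin m) (Fin m) ℝ)).det
    + w * entrySum (cof (M + ε • (1 : Matrix (Fin m) (Fin m) ℝ)))
  have hA : Continuous fun ε : ℝ => M + ε • (1 : Matrix (Fin m) (Fin m) ℝ) :=
    continuous_const.add (continuous_id.smul continuous_const)
  have hf : Continuous f := (hA.add continuous_const).matrix_det
  have hg : Continuous g := by
    apply hA.matrix_det.add
    apply continuous_const.mul
    simp only [entrySum_cof]
    exact continuous_finset_sum _ fun i _ => continuous_finset_sum _ fun j _ =>
      (hA.matrix_adjugate.matrix_elem i j)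
  have heq : f =ᶠ[𝓝[≠] (0:ℝ)] g := by
    filter_upwards [hev] with ε hε
    have hu : IsUnit (M + ε • (1 : Matrix (Fin m) (Fin m) ℝ)).det := by
      rw [isUnit_iff_ne_zero, hp ε]
      exact hε
    simpa [f, g, entrySum_cof] using key (M + ε • (1 : Matrix (Fin m) (Fin m) ℝ)) w hu
  have h1 : Tendsto f (𝓝[≠] (0:ℝ)) (𝓝 (f 0)) :=
    (hf.tendsto 0).mono_left nhdsWithin_le_nhds
  have h2 : Tendsto g (𝓝[≠] (0:ℝ)) (𝓝 (g 0)) :=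
    (hg.tendsto 0).mono_left nhdsWithin_le_nhds
  have := tendsto_nhds_unique (h1.congr' heq) h2
  simpa [f, g] using this
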